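/- arXiv:2410.11957 — 2 statements merged into one kernel-verified Lean document; each statement's English description precedes it below -/
import Mathlib

section
/- Let A be a 2^n × 2^n complex matrix with singular value decomposition A = UΣV†, where U and V are unitary and Σ is diagonal with nonnegative real entries. Then for every 2^n × 2^n unitary matrix B, ‖A − UV†‖_F ≤ ‖A − B‖_F. In other words, UV† is a closest unitary matrix to A in Frobenius norm. -/
open Matrix

/-- Squared Frobenius norm `‖A‖_F² = ∑ᵢⱼ |Aᵢⱼ|²`. -/
noncomputable def frobSq {m : Type*} [Fintype m] (A : Matrix m m ℂ) : ℝ :=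
  ∑ i, ∑ j, ‖A i j‖ ^ 2

section aux
variable {m : Type*} [Fintype m] [DecidableEq m]

lemma frobSq_sub_eq (A B : Matrix m m ℂ) :
    frobSq (A - B) = frobSq A + frobSq B - 2 * ((Bᴴ * A).trace).re := by
  have htr : ((Bᴴ * A).trace).re
      = ∑ i, ∑ j, ((starRingEnd ℂ) (B i j) * A i j).re := by
    rw [Matrix.trace]
    simp only [Matrix.diag_apply, Matrix.mul_apply, Matrix.conjTranspose_apply,
      Complex.re_sum]
    rw [Finset.sum_comm]
    simp [Matrix.conjTranspose_apply]
  have hpt : ∀ i j, Complex.normSq (A i j - B i j)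
      = Complex.normSq (A i j) + Complex.normSq (B i j)
        - 2 * ((starRingEnd ℂ) (B i j) * A i j).re := by
    intro i j
    rw [Complex.normSq_sub, mul_comm (A i j)]
  simp only [frobSq, Complex.sq_norm, Matrix.sub_apply, htr, hpt,
    Finset.sum_sub_distrib, Finset.sum_add_distrib, Finset.mul_sum]

lemma row_normSq_one {W : Matrix m m ℂ} (hW : W ∈ Matrix.unitaryGroup m ℂ) (i : m) :
    ∑ j, Complex.normSq (W i j) = 1 := by
  have h : W * Wᴴ = 1 := by
    have := Matrix.mem_unitaryGroup_iff.mp hW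
    simpa [Matrix.star_eq_conjTranspose] using this
  have := congrArg (fun M => (M i i).re) h
  simpa [Matrix.mul_apply, Matrix.one_apply, Matrix.conjTranspose_apply,
    Complex.re_sum, Complex.mul_conj] using this

lemma frobSq_unitary {B : Matrix m m ℂ} (hB : B ∈ Matrix.unitaryGroup m ℂ) :
    frobSq B = Fintype.card m := by
  simp only [frobSq, Complex.sq_norm]
  rw [Finset.sum_congr rfl fun i _ => row_normSq_one hB i]
  simp only [Finset.sum_const, Finset.card_univ, nsmul_eq_mul, mul_one]

lemma trace_mul_diag_le (W S : Matrix m m ℂ) (hW : W ∈ Matrix.unitaryGroup m ℂ)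
    (hSdiag : S.IsDiag) (hSnn : ∀ i, 0 ≤ (S i i).re ∧ (S i i).im = 0) :
    ((W * S).trace).re ≤ ∑ i, (S i i).re := by
  have hdiag : ∀ i, (W * S) i i = W i i * S i i := by
    intro i
    rw [Matrix.mul_apply]
    refine Finset.sum_eq_single i (fun j _ hj => ?_) (by simp)
    rw [hSdiag hj, mul_zero]
  rw [Matrix.trace]
  simp only [Matrix.diag_apply, Complex.re_sum, hdiag]
  refine Finset.sum_le_sum fun i _ => ?_
  have habs : ‖W i i‖ ≤ 1 := by
    have h1 : Complex.normSq (W i i) ≤ 1 := by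
      rw [← row_normSq_one hW i]
      exact Finset.single_le_sum (fun j _ => Complex.normSq_nonneg _) (Finset.mem_univ i)
    have := Real.sqrt_le_sqrt h1
    simpa [Complex.norm_def] using this
  have hre : (W i i * S i i).re = (W i i).re * (S i i).re := by
    rw [Complex.mul_re, (hSnn i).2, mul_zero, sub_zero]
  rw [hre]
  calc (W i i).re * (S i i).re ≤ 1 * (S i i).re := by
        refine mul_le_mul_of_nonneg_right ?_ (hSnn i).1
        exact le_trans (Complex.re_le_norm _) habs
    _ = (S i i).re := one_mul _

end aux

theorem stmt3 (n : ℕ) (A U V S : Matrix (Fin (2 ^ n)) (Fin (2 ^ n)) ℂ)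
    (hU : U ∈ Matrix.unitaryGroup (Fin (2 ^ n)) ℂ)
    (hV : V ∈ Matrix.unitaryGroup (Fin (2 ^ n)) ℂ)
    (hSdiag : S.IsDiag)
    (hSnn : ∀ i, 0 ≤ (S i i).re ∧ (S i i).im = 0)
    (hA : A = U * S * Vᴴ)
    (B : Matrix (Fin (2 ^ n)) (Fin (2 ^ n)) ℂ)
    (hB : B ∈ Matrix.unitaryGroup (Fin (2 ^ n)) ℂ) :
    Real.sqrt (frobSq (A - U * Vᴴ)) ≤ Real.sqrt (frobSq (A - B)) := by
  have hUU : Uᴴ * U = 1 := by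
    have := hU.1; simpa [Matrix.star_eq_conjTranspose] using this
  have hVV : Vᴴ * V = 1 := by
    have := hV.1; simpa [Matrix.star_eq_conjTranspose] using this
  have hUVmem : U * Vᴴ ∈ Matrix.unitaryGroup (Fin (2 ^ n)) ℂ := by
    exact mul_mem hU (by simpa [Matrix.star_eq_conjTranspose] using Unitary.star_mem hV)
  -- trace for the candidate UVᴴ
  have htr1 : (((U * Vᴴ)ᴴ * A).trace).re = ∑ i, (S i i).re := by
    rw [hA]
    have : (U * Vᴴ)ᴴ * (U * S * Vᴴ) = V * S * Vᴴ := by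
      rw [Matrix.conjTranspose_mul, Matrix.conjTranspose_conjTranspose]
      calc V * Uᴴ * (U * S * Vᴴ) = V * (Uᴴ * U) * S * Vᴴ := by
            noncomm_ring
        _ = V * S * Vᴴ := by rw [hUU, Matrix.mul_one]
    rw [this, Matrix.trace_mul_cycle, hVV, Matrix.one_mul, Matrix.trace]
    simp [Complex.re_sum]
  -- trace for B
  have htr2 : ((Bᴴ * A).trace).re ≤ ∑ i, (S i i).re := by
    rw [hA]
    have hcyc : (Bᴴ * (U * S * Vᴴ)).trace = ((Vᴴ * Bᴴ * U) * S).trace := by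
      rw [show Bᴴ * (U * S * Vᴴ) = (Bᴴ * U * S) * Vᴴ by noncomm_ring,
        Matrix.trace_mul_comm]
      congr 1
      noncomm_ring
    rw [hcyc]
    refine trace_mul_diag_le _ _ ?_ hSdiag hSnn
    have hBh : Bᴴ ∈ Matrix.unitaryGroup (Fin (2 ^ n)) ℂ := by
      simpa [Matrix.star_eq_conjTranspose] using Unitary.star_mem hB
    have hVh : Vᴴ ∈ Matrix.unitaryGroup (Fin (2 ^ n)) ℂ := by
      simpa [Matrix.star_eq_conjTranspose] using Unitary.star_mem hV
    exact mul_mem (mul_mem hVh hBh) hU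
  have key : frobSq (A - U * Vᴴ) ≤ frobSq (A - B) := by
    rw [frobSq_sub_eq, frobSq_sub_eq, frobSq_unitary hB, frobSq_unitary hUVmem]
    linarith [htr1, htr2]
  exact Real.sqrt_le_sqrt key
end

section
/- Let Φ be a quantum channel (completely positive trace-preserving map) on 2^n × 2^n matrices. Then its diagonal Fourier coefficients satisfy 0 ≤ Φ̂(x,x) ≤ 1 for every x ∈ {0,1,2,3}^n, and ∑_{x ∈ {0,1,2,3}^n} Φ̂(x,x) = 1; i.e., the diagonal Fourier coefficients form a probability distribution. -/
open scoped Classical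
open Matrix MeasureTheory
open scoped ComplexOrder

noncomputable def pauli (a : Fin 4) : Matrix (Fin 2) (Fin 2) ℂ :=
  if a = 0 then 1
  else if a = 1 then !![0, 1; 1, 0]
  else if a = 2 then !![0, -Complex.I; Complex.I, 0]
  else !![1, 0; 0, -1]

/-- The Pauli string `σ_x = σ_{x 1} ⊗ ⋯ ⊗ σ_{x n}` as a `2^n × 2^n` matrix,
indexed by `Fin n → Fin 2`. -/
noncomputable def pauliString (n : ℕ) (x : Fin n → Fin 4) :
    Matrix (Fin n → Fin 2) (Fin n → Fin 2) ℂ :=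
  fun i j => ∏ k, pauli (x k) (i k) (j k)

/-- The Pauli coefficient `Â_x = 2^{-n} tr(σ_x A)`. -/
noncomputable def pauliCoeff (n : ℕ) (A : Matrix (Fin n → Fin 2) (Fin n → Fin 2) ℂ)
    (x : Fin n → Fin 4) : ℂ :=
  (pauliString n x * A).trace / 2 ^ n

/-- The Choi representation `J(Φ) = ∑_{i,j} Φ(|i⟩⟨j|) ⊗ |i⟩⟨j|` of a superoperator,
so that `J(Φ) ((a,b),(c,d)) = Φ(E_{bd})_{ac}`. -/
noncomputable def choi {m : Type*} [Fintype m] [DecidableEq m]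
    (Φ : Matrix m m ℂ → Matrix m m ℂ) : Matrix (m × m) (m × m) ℂ :=
  fun p q => Φ (Matrix.single p.2 q.2 1) p.1 q.1

/-- The basis superoperator `Φ_{x,y}(ρ) = σ_x ρ σ_y`. -/
noncomputable def pauliSuper (n : ℕ) (x y : Fin n → Fin 4) :
    Matrix (Fin n → Fin 2) (Fin n → Fin 2) ℂ → Matrix (Fin n → Fin 2) (Fin n → Fin 2) ℂ :=
  fun ρ => pauliString n x * ρ * pauliString n y

/-- The Fourier coefficient `Φ̂(x,y) = 4^{-n} tr(J(Φ_{x,y})† J(Φ))` of a superoperator. -/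
noncomputable def fcoeff (n : ℕ)
    (Φ : Matrix (Fin n → Fin 2) (Fin n → Fin 2) ℂ → Matrix (Fin n → Fin 2) (Fin n → Fin 2) ℂ)
    (x y : Fin n → Fin 4) : ℂ :=
  ((choi (pauliSuper n x y))ᴴ * choi Φ).trace / 4 ^ n

lemma pauli_conj (a : Fin 4) (i j : Fin 2) :
    (starRingEnd ℂ) (pauli a i j) = pauli a j i := by
  fin_cases a <;> fin_cases i <;> fin_cases j <;> simp [pauli, Matrix.one_apply]

lemma pauli_sum (i j k l : Fin 2) :
    ∑ s : Fin 4, (starRingEnd ℂ) (pauli s i j) * pauli s k l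
      = if i = k ∧ j = l then 2 else 0 := by
  fin_cases i <;> fin_cases j <;> fin_cases k <;> fin_cases l <;>
    simp [pauli, Fin.sum_univ_four, Matrix.one_apply] <;> ring_nf

lemma pauliString_conj (n : ℕ) (x : Fin n → Fin 4) (a b : Fin n → Fin 2) :
    (starRingEnd ℂ) (pauliString n x a b) = pauliString n x b a := by
  simp [pauliString, map_prod, pauli_conj]

lemma pauliString_sum (n : ℕ) (a b c d : Fin n → Fin 2) :
    ∑ x : Fin n → Fin 4, (starRingEnd ℂ) (pauliString n x a b) * pauliString n x c d
      = if a = c ∧ b = d then (2:ℂ)^n else 0 := by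
  have h1 : ∀ x : Fin n → Fin 4,
      (starRingEnd ℂ) (pauliString n x a b) * pauliString n x c d
        = ∏ k, ((starRingEnd ℂ) (pauli (x k) (a k) (b k)) * pauli (x k) (c k) (d k)) := by
    intro x
    simp [pauliString, map_prod, Finset.prod_mul_distrib]
  rw [Finset.sum_congr rfl fun x _ => h1 x]
  have h2 := Finset.prod_univ_sum (fun _ : Fin n => (Finset.univ : Finset (Fin 4)))
    (fun k s => (starRingEnd ℂ) (pauli s (a k) (b k)) * pauli s (c k) (d k))
  rw [Fintype.piFinset_univ] at h2
  rw [← h2]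
  simp only [pauli_sum]
  by_cases h : a = c ∧ b = d
  · simp [h.1, h.2, Finset.prod_const]
  · rw [if_neg h]
    have hk : ¬ ∀ k, a k = c k ∧ b k = d k := fun hc =>
      h ⟨funext fun k => (hc k).1, funext fun k => (hc k).2⟩
    obtain ⟨k, hk⟩ := not_forall.mp hk
    exact Finset.prod_eq_zero (Finset.mem_univ k) (if_neg hk)

lemma choi_pauliSuper (n : ℕ) (x : Fin n → Fin 4)
    (p q : (Fin n → Fin 2) × (Fin n → Fin 2)) :
    choi (pauliSuper n x x) p q = pauliString n x p.1 p.2 * pauliString n x q.2 q.1 := by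
  simp [choi, pauliSuper, Matrix.mul_apply, Matrix.single, mul_ite, ite_mul,
    Finset.sum_ite_eq, Finset.sum_ite_eq', and_comm, Finset.mul_sum, Finset.sum_mul]
  simp [ite_and, Finset.sum_ite_eq, Finset.sum_ite_eq']

theorem stmt12 (n : ℕ)
    (Φ : Matrix (Fin n → Fin 2) (Fin n → Fin 2) ℂ →ₗ[ℂ]
         Matrix (Fin n → Fin 2) (Fin n → Fin 2) ℂ)
    (hCP : (choi (⇑Φ)).PosSemidef)
    (hTP : ∀ ρ, (Φ ρ).trace = ρ.trace) :
    (∀ x : Fin n → Fin 4,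
      0 ≤ (fcoeff n (⇑Φ) x x).re ∧ (fcoeff n (⇑Φ) x x).re ≤ 1 ∧
        (fcoeff n (⇑Φ) x x).im = 0) ∧
    ∑ x : Fin n → Fin 4, fcoeff n (⇑Φ) x x = 1 := by
  set M := choi (⇑Φ) with hM
  set w : (Fin n → Fin 4) → ((Fin n → Fin 2) × (Fin n → Fin 2)) → ℂ :=
    fun x p => pauliString n x p.1 p.2 with hw
  -- the quadratic-form expression of the trace
  have hquad : ∀ x, ((choi (pauliSuper n x x))ᴴ * M).trace
      = star (w x) ⬝ᵥ (M *ᵥ w x) := by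
    intro x
    simp only [Matrix.trace, Matrix.diag, Matrix.mul_apply, Matrix.conjTranspose_apply,
      choi_pauliSuper, dotProduct, Matrix.mulVec, Pi.star_apply, hw]
    rw [Finset.sum_comm]
    refine Finset.sum_congr rfl fun p _ => ?_
    rw [Finset.mul_sum]
    refine Finset.sum_congr rfl fun q _ => ?_
    simp only [Complex.star_def, _root_.map_mul, pauliString_conj]
    ring
  have hfc : ∀ x, fcoeff n (⇑Φ) x x = (star (w x) ⬝ᵥ (M *ᵥ w x)) / 4 ^ n := by
    intro x
    rw [fcoeff, ← hM, hquad x]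
  have hpos : ∀ x, 0 ≤ star (w x) ⬝ᵥ (M *ᵥ w x) := fun x => hCP.dotProduct_mulVec_nonneg (w x)
  -- sum of quadratic forms
  have htr : ∑ p : (Fin n → Fin 2) × (Fin n → Fin 2), M p p = (2:ℂ)^n := by
    rw [Fintype.sum_prod_type, Finset.sum_comm]
    have : ∀ b : Fin n → Fin 2,
        ∑ a : Fin n → Fin 2, M (a, b) (a, b) = 1 := by
      intro b
      have h1 : ∑ a : Fin n → Fin 2, M (a, b) (a, b)
          = (Φ (Matrix.single b b 1)).trace := by
        simp [hM, choi, Matrix.trace, Matrix.diag]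
      rw [h1, hTP]
      simp [Matrix.trace, Matrix.diag, Matrix.single, Finset.sum_ite_eq]
    rw [Finset.sum_congr rfl fun b _ => this b]
    simp [Finset.card_univ]
  have key : ∑ x : Fin n → Fin 4, star (w x) ⬝ᵥ (M *ᵥ w x) = (2:ℂ)^n * (2:ℂ)^n := by
    calc ∑ x : Fin n → Fin 4, star (w x) ⬝ᵥ (M *ᵥ w x)
        = ∑ x : Fin n → Fin 4, ∑ p, ∑ q,
            (starRingEnd ℂ) (w x p) * w x q * M p q := by
          refine Finset.sum_congr rfl fun x _ => ?_
          simp only [dotProduct, Matrix.mulVec, Pi.star_apply, Complex.star_def,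
            Finset.mul_sum]
          exact Finset.sum_congr rfl fun p _ => Finset.sum_congr rfl fun q _ => by ring
      _ = ∑ p, ∑ q, (∑ x : Fin n → Fin 4, (starRingEnd ℂ) (w x p) * w x q) * M p q := by
          rw [Finset.sum_comm]
          refine Finset.sum_congr rfl fun p _ => ?_
          rw [Finset.sum_comm]
          exact Finset.sum_congr rfl fun q _ => (Finset.sum_mul _ _ _).symm
      _ = ∑ p, ∑ q, (if p = q then (2:ℂ)^n else 0) * M p q := by
          refine Finset.sum_congr rfl fun p _ => Finset.sum_congr rfl fun q _ => ?_
          simp only [hw]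
          rw [pauliString_sum]
          congr 1
          simp [Prod.ext_iff]
      _ = ∑ p, (2:ℂ)^n * M p p := by
          refine Finset.sum_congr rfl fun p _ => ?_
          simp [ite_mul, Finset.sum_ite_eq]
      _ = (2:ℂ)^n * ∑ p, M p p := by rw [Finset.mul_sum]
      _ = (2:ℂ)^n * (2:ℂ)^n := by rw [htr]
  have h4 : ((4:ℂ)^n) ≠ 0 := pow_ne_zero _ (by norm_num)
  have hsum : ∑ x : Fin n → Fin 4, fcoeff n (⇑Φ) x x = 1 := by
    rw [Finset.sum_congr rfl fun x _ => hfc x, ← Finset.sum_div, key]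
    rw [← mul_pow]
    norm_num
  refine ⟨fun x => ?_, hsum⟩
  obtain ⟨hre0, him0⟩ : 0 ≤ (star (w x) ⬝ᵥ (M *ᵥ w x)).re ∧
      (star (w x) ⬝ᵥ (M *ᵥ w x)).im = 0 := by
    have := hpos x
    rw [Complex.le_def] at this
    exact ⟨this.1, (this.2).symm⟩
  set t := star (w x) ⬝ᵥ (M *ᵥ w x) with ht
  have hfre : (fcoeff n (⇑Φ) x x).re = t.re / 4 ^ n ∧ (fcoeff n (⇑Φ) x x).im = 0 := by
    rw [hfc x, ← ht]
    have h41 : ((4:ℂ)^n) = ((4^n : ℝ) : ℂ) := by push_cast; ring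
    rw [h41, Complex.div_ofReal_re, Complex.div_ofReal_im, him0]
    exact ⟨rfl, zero_div _⟩
  refine ⟨?_, ?_, hfre.2⟩
  · rw [hfre.1]
    positivity
  · -- each term is at most the total sum
    have hresum : ∑ x : Fin n → Fin 4, (fcoeff n (⇑Φ) x x).re = 1 := by
      have := congrArg Complex.re hsum
      simpa [Complex.re_sum] using this
    rw [← hresum]
    refine Finset.single_le_sum (f := fun y => (fcoeff n (⇑Φ) y y).re) (fun y _ => ?_) (Finset.mem_univ x)
    show 0 ≤ (fcoeff n (⇑Φ) y y).re
    rw [hfc y]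
    have hy := hpos y
    rw [Complex.le_def] at hy
    have h41 : ((4:ℂ)^n) = ((4^n : ℝ) : ℂ) := by push_cast; ring
    rw [h41, Complex.div_ofReal_re]
    exact div_nonneg (by simpa using hy.1) (by positivity)
end
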